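/- Let A and Â be n×m real matrices and let k ≤ min(n,m). Suppose ‖Â − A‖ ≤ ε with ε < σ_k(A)/12. Let (Û, D̂, V̂) be a rank-k truncated SVD of Â (which exists since σ_k(Â) ≥ σ_k(A) − ε > 0) and let Ŵ = Û D̂⁻¹ be the associated whitening matrix. Then ‖I_k − Ŵᵀ A Aᵀ Ŵ‖ ≤ 6ε/σ_k(A). -/

import Mathlib

open Matrix

/-- The `j`-th largest singular value (1-indexed) of a real `n × m` matrix,
defined as the square root of the `j`-th largest eigenvalue of `Aᵀ * A`;
it is `0` when `j = 0` or `j > m`. -/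
noncomputable def sval {n m : ℕ} (A : Matrix (Fin n) (Fin m) ℝ) (j : ℕ) : ℝ :=
  if 1 ≤ j ∧ j ≤ m then
    (((Finset.univ.val.map fun i =>
        Real.sqrt ((Matrix.isHermitian_conjTranspose_mul_self A).eigenvalues i)).sort (· ≤ ·)).getD
      (m - j) 0)
  else 0

/-- The spectral norm (ℓ₂ operator norm) of a real matrix, i.e. its largest singular value. -/
noncomputable def matSpectralNorm {n m : ℕ} (A : Matrix (Fin n) (Fin m) ℝ) : ℝ := sval A 1

/-- Euclidean norm of a vector. -/
noncomputable def evnorm {n : ℕ} (x : Fin n → ℝ) : ℝ := Real.sqrt (∑ i, (x i) ^ 2)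

/-- `M^{1/2}`: the unique positive semidefinite square root of a positive semidefinite
real matrix (junk value `0` if `M` is not positive semidefinite). -/
noncomputable def msqrt {k : ℕ} (M : Matrix (Fin k) (Fin k) ℝ) : Matrix (Fin k) (Fin k) ℝ :=
  by classical exact if h : M.PosSemidef then
    ((h.1.eigenvectorUnitary : Matrix (Fin k) (Fin k) ℝ) *
      Matrix.diagonal (fun i => ((Real.sqrt (h.1.eigenvalues i) : ℝ) : ℝ)) *
      (star h.1.eigenvectorUnitary : Matrix (Fin k) (Fin k) ℝ)) else 0

open scoped Matrix.Norms.L2Operator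

lemma sort_eq_ofFn {m : ℕ} (f : Fin m → ℝ) :
    ((Finset.univ.val.map f).sort (· ≤ ·)) = List.ofFn (f ∘ Tuple.sort f) := by
  apply List.Perm.eq_of_sortedLE (Multiset.pairwise_sort _ _).sortedLE
    ((Tuple.monotone_sort f).sortedLE_ofFn)
  have h1 : ((Finset.univ.val.map f).sort (· ≤ ·) : Multiset ℝ) = Finset.univ.val.map f :=
    Multiset.sort_eq _ _
  have h2 : (List.ofFn (f ∘ Tuple.sort f) : Multiset ℝ) = Finset.univ.val.map f := by
    rw [List.ofFn_eq_map]
    show ((List.finRange m).map (f ∘ Tuple.sort f) : Multiset ℝ) = _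
    have : (Finset.univ.val.map (f ∘ Tuple.sort f)) = Finset.univ.val.map f := by
      rw [← Multiset.map_map]
      congr 1
      exact congrArg Finset.val (Finset.map_univ_equiv (Tuple.sort f))
    simpa [Finset.univ, Fintype.elems] using this
  exact Quotient.exact (h1.trans h2.symm)

lemma toEuclideanLin_mul_apply {n m p : ℕ} (M : Matrix (Fin n) (Fin m) ℝ)
    (N : Matrix (Fin m) (Fin p) ℝ) (x : EuclideanSpace ℝ (Fin p)) :
    toEuclideanLin (M * N) x = toEuclideanLin M (toEuclideanLin N x) := by
  simp only [toEuclideanLin_apply]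
  show (WithLp.equiv 2 (Fin n → ℝ)).symm ((M * N) *ᵥ _) = _
  rw [← Matrix.mulVec_mulVec]
  rfl

/-- sorted eigendata for `AᵀA`. -/
lemma exists_sorted_eigen {n m : ℕ} (A : Matrix (Fin n) (Fin m) ℝ) :
    ∃ (u : OrthonormalBasis (Fin m) ℝ (EuclideanSpace ℝ (Fin m))) (ν : Fin m → ℝ),
      Monotone ν ∧ (∀ i, 0 ≤ ν i) ∧
      (∀ x : EuclideanSpace ℝ (Fin m),
        ‖toEuclideanLin A x‖ ^ 2 = ∑ i, ν i * (inner ℝ (u i) x : ℝ) ^ 2) ∧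
      (∀ j : ℕ, ∀ hj1 : 1 ≤ j, ∀ hj : j ≤ m, sval A j = Real.sqrt (ν ⟨m - j, by omega⟩)) := by
  classical
  set hH := Matrix.isHermitian_conjTranspose_mul_self A with hHdef
  set μ := hH.eigenvalues with hμ
  set f : Fin m → ℝ := fun i => Real.sqrt (μ i) with hf
  set e := Tuple.sort f with he
  set b := hH.eigenvectorBasis with hb
  have hH1 : ∀ j, toEuclideanLin (Aᴴ * A) (b j) = μ j • (b j : EuclideanSpace ℝ (Fin m)) := by
    intro j
    rw [toEuclideanLin_apply]
    show (WithLp.equiv 2 (Fin m → ℝ)).symm ((Aᴴ * A) *ᵥ ⇑(b j)) = _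
    rw [hH.mulVec_eigenvectorBasis j]
    rfl
  refine ⟨b.reindex e.symm, fun i => μ (e i), ?_, ?_, ?_, ?_⟩
  · have hm : Monotone (f ∘ e) := Tuple.monotone_sort f
    intro i j hij
    have h0 : ∀ i, 0 ≤ μ i := (Matrix.posSemidef_conjTranspose_mul_self A).eigenvalues_nonneg
    have := hm hij
    simp only [Function.comp, hf] at this
    nlinarith [Real.sq_sqrt (h0 (e i)), Real.sq_sqrt (h0 (e j)), Real.sqrt_nonneg (μ (e i)),
      Real.sqrt_nonneg (μ (e j))]
  · exact fun i => (Matrix.posSemidef_conjTranspose_mul_self A).eigenvalues_nonneg (e i)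
  · intro x
    have key : ‖toEuclideanLin A x‖ ^ 2 = (inner ℝ x (toEuclideanLin (Aᴴ * A) x) : ℝ) := by
      rw [toEuclideanLin_mul_apply, toEuclideanLin_conjTranspose_eq_adjoint,
        LinearMap.adjoint_inner_right, real_inner_self_eq_norm_sq]
    have hx2 : toEuclideanLin (Aᴴ * A) x = ∑ i, (b.repr x i * μ i) • (b i) := by
      conv_lhs => rw [← b.sum_repr x]
      rw [map_sum]
      refine Finset.sum_congr rfl fun i _ => ?_
      rw [LinearMap.map_smul, hH1, smul_smul]
    have expand : (inner ℝ x (toEuclideanLin (Aᴴ * A) x) : ℝ) = ∑ i, μ i * (b.repr x i) ^ 2 := by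
      rw [hx2, inner_sum]
      refine Finset.sum_congr rfl fun i _ => ?_
      rw [real_inner_smul_right, real_inner_comm, ← b.repr_apply_apply]
      ring
    rw [key, expand]
    rw [← Equiv.sum_comp e (fun i => μ i * (b.repr x i) ^ 2)]
    refine Finset.sum_congr rfl fun i _ => ?_
    rw [OrthonormalBasis.reindex_apply, Equiv.symm_symm, ← b.repr_apply_apply]
  · intro j hj1 hj2
    have hlt : m - j < (List.ofFn (f ∘ e)).length := by simp; omega
    have : sval A j = (List.ofFn (f ∘ e)).getD (m - j) 0 := by
      rw [sval, if_pos ⟨hj1, hj2⟩,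
        show (fun i => Real.sqrt ((Matrix.isHermitian_conjTranspose_mul_self A).eigenvalues i)) = f
          from rfl,
        sort_eq_ofFn]
    rw [this, List.getD_eq_getElem _ _ hlt]
    simp [f]

lemma opNorm_le_bound' {n m : ℕ} (A : Matrix (Fin n) (Fin m) ℝ) {c : ℝ} (hc : 0 ≤ c)
    (h : ∀ x : EuclideanSpace ℝ (Fin m), ‖toEuclideanLin A x‖ ≤ c * ‖x‖) : ‖A‖ ≤ c := by
  rw [Matrix.l2_opNorm_def]
  exact ContinuousLinearMap.opNorm_le_bound _ hc h

lemma le_opNorm' {n m : ℕ} (A : Matrix (Fin n) (Fin m) ℝ) (x : EuclideanSpace ℝ (Fin m)) :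
    ‖toEuclideanLin A x‖ ≤ ‖A‖ * ‖x‖ :=
  ((toEuclideanLin ≪≫ₗ LinearMap.toContinuousLinearMap) A).le_opNorm x

lemma norm_sq_eq_sum_inner {m : ℕ} (u : OrthonormalBasis (Fin m) ℝ (EuclideanSpace ℝ (Fin m)))
    (x : EuclideanSpace ℝ (Fin m)) : ‖x‖ ^ 2 = ∑ i, (inner ℝ (u i) x : ℝ) ^ 2 := by
  have h1 : ‖x‖ = ‖u.repr x‖ := (u.repr.norm_map x).symm
  rw [h1, EuclideanSpace.norm_eq, Real.sq_sqrt (by positivity)]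
  exact Finset.sum_congr rfl fun i _ => by
    rw [u.repr_apply_apply, Real.norm_eq_abs, sq_abs]

lemma sval_nonneg {n m : ℕ} (A : Matrix (Fin n) (Fin m) ℝ) (j : ℕ) : 0 ≤ sval A j := by
  rcases le_or_gt 1 j with hj | hj
  · rcases le_or_gt j m with hjm | hjm
    · obtain ⟨u, ν, _, _, _, hsv⟩ := exists_sorted_eigen A
      rw [hsv j hj hjm]; exact Real.sqrt_nonneg _
    · rw [sval, if_neg (by omega)]
  · rw [sval, if_neg (by omega)]

lemma sval_antitone {n m : ℕ} (A : Matrix (Fin n) (Fin m) ℝ) {j j' : ℕ}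
    (h1 : 1 ≤ j) (h2 : j ≤ j') (h3 : j' ≤ m) : sval A j' ≤ sval A j := by
  obtain ⟨u, ν, hmono, hnn, _, hsv⟩ := exists_sorted_eigen A
  rw [hsv j h1 (by omega), hsv j' (by omega) h3]
  exact Real.sqrt_le_sqrt (hmono (by simp [Fin.le_def]; omega))

lemma sval_one_eq_opNorm {n m : ℕ} (A : Matrix (Fin n) (Fin m) ℝ) : sval A 1 = ‖A‖ := by
  rcases Nat.eq_zero_or_pos m with hm | hm
  · subst hm
    have h0 : ‖A‖ ≤ 0 := opNorm_le_bound' A le_rfl fun x => by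
      have : (x : EuclideanSpace ℝ (Fin 0)) = 0 := Subsingleton.elim _ _
      simp [this]
    have h1 : sval A 1 = 0 := by rw [sval, if_neg (by omega)]
    have h2 : ‖A‖ = 0 := le_antisymm h0 (norm_nonneg A)
    rw [h1, h2]
  · obtain ⟨u, ν, hmono, hnn, hnorm, hsv⟩ := exists_sorted_eigen A
    set l : Fin m := ⟨m - 1, by omega⟩
    have hsv1 : sval A 1 = Real.sqrt (ν l) := hsv 1 le_rfl (by omega)
    refine le_antisymm ?_ ?_
    · -- sqrt ν_l ≤ ‖A‖ : test vector u l
      have h1 : ‖toEuclideanLin A (u l)‖ ^ 2 = ν l := by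
        rw [hnorm (u l), Fintype.sum_eq_single l fun i hi => ?_]
        · have : (inner ℝ (u l) (u l) : ℝ) = 1 := by
            rw [real_inner_self_eq_norm_sq, u.orthonormal.1 l]; norm_num
          rw [this]; ring
        · rw [u.orthonormal.2 hi]; ring
      rw [hsv1, ← h1, Real.sqrt_sq (norm_nonneg _)]
      calc ‖toEuclideanLin A (u l)‖ ≤ ‖A‖ * ‖u l‖ := le_opNorm' A (u l)
        _ = ‖A‖ := by rw [u.orthonormal.1 l, mul_one]
    · -- ‖A‖ ≤ sqrt ν_l
      rw [hsv1]
      refine opNorm_le_bound' A (Real.sqrt_nonneg _) fun x => ?_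
      have hb : ‖toEuclideanLin A x‖ ^ 2 ≤ ν l * ‖x‖ ^ 2 := by
        rw [hnorm x, norm_sq_eq_sum_inner u x, Finset.mul_sum]
        refine Finset.sum_le_sum fun i _ => ?_
        have : ν i ≤ ν l := hmono (by simp [Fin.le_def, l]; omega)
        nlinarith [sq_nonneg (inner ℝ (u i) x : ℝ)]
      have := Real.sqrt_le_sqrt hb
      rw [Real.sqrt_sq (norm_nonneg _), Real.sqrt_mul (hnn l), Real.sqrt_sq (norm_nonneg _)] at this
      exact this

lemma inner_eq_zero_of_mem_span {m : ℕ}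
    (u : OrthonormalBasis (Fin m) ℝ (EuclideanSpace ℝ (Fin m))) (p : Fin m → Prop)
    {x : EuclideanSpace ℝ (Fin m)}
    (hx : x ∈ Submodule.span ℝ (Set.range fun i : {i : Fin m // p i} => u i.val)) {j : Fin m}
    (hj : ¬ p j) : (inner ℝ (u j) x : ℝ) = 0 := by
  induction hx using Submodule.span_induction with
  | mem y hy =>
    obtain ⟨i, rfl⟩ := hy
    exact u.orthonormal.2 (fun h => hj (h ▸ i.2))
  | zero => exact inner_zero_right _
  | add y z _ _ hy hz => rw [inner_add_right, hy, hz, add_zero]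
  | smul c y _ hy => rw [real_inner_smul_right, hy, mul_zero]

lemma card_ici {m : ℕ} (a : Fin m) : Fintype.card {i : Fin m // a ≤ i} = m - a.val := by
  have e : {i : Fin m // a ≤ i} ≃ Fin (m - a.val) :=
    { toFun := fun i => ⟨i.val.val - a.val, by have := i.val.isLt; have := i.2; omega⟩
      invFun := fun j => ⟨⟨a.val + j.val, by have := j.isLt; omega⟩, by
        rw [Fin.le_def]; simp⟩
      left_inv := fun i => by
        have h1 := i.2
        rw [Fin.le_def] at h1
        apply Subtype.ext; apply Fin.ext; simp; omega
      right_inv := fun j => by apply Fin.ext; simp }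
  rw [Fintype.card_congr e, Fintype.card_fin]

lemma card_iic {m : ℕ} (a : Fin m) : Fintype.card {i : Fin m // i ≤ a} = a.val + 1 := by
  have e : {i : Fin m // i ≤ a} ≃ Fin (a.val + 1) :=
    { toFun := fun i => ⟨i.val.val, by have := i.2; rw [Fin.le_def] at this; omega⟩
      invFun := fun j => ⟨⟨j.val, by have := j.isLt; have := a.isLt; omega⟩, by
        rw [Fin.le_def]; simp; omega⟩
      left_inv := fun i => by apply Subtype.ext; apply Fin.ext; simp
      right_inv := fun j => by apply Fin.ext; simp }
  rw [Fintype.card_congr e, Fintype.card_fin]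

lemma weyl_sval {n m k : ℕ} (hk1 : 1 ≤ k) (hkm : k ≤ m) (A B : Matrix (Fin n) (Fin m) ℝ) :
    sval A k ≤ sval B k + ‖A - B‖ := by
  obtain ⟨u, ν, hνm, hνn, hνx, hνs⟩ := exists_sorted_eigen A
  obtain ⟨w, τ, hτm, hτn, hτx, hτs⟩ := exists_sorted_eigen B
  set a : Fin m := ⟨m - k, by omega⟩ with ha
  set S := Submodule.span ℝ (Set.range fun i : {i : Fin m // a ≤ i} => u i.val) with hS
  set T := Submodule.span ℝ (Set.range fun i : {i : Fin m // i ≤ a} => w i.val) with hT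
  have hdimS : Module.finrank ℝ S = k := by
    have h : Module.finrank ℝ S = Fintype.card {i : Fin m // a ≤ i} :=
      finrank_span_eq_card
        (u.orthonormal.linearIndependent.comp Subtype.val Subtype.val_injective)
    rw [h, card_ici]; simp [ha]; omega
  have hdimT : Module.finrank ℝ T = m - k + 1 := by
    have h : Module.finrank ℝ T = Fintype.card {i : Fin m // i ≤ a} :=
      finrank_span_eq_card
        (w.orthonormal.linearIndependent.comp Subtype.val Subtype.val_injective)
    rw [h, card_iic]
  have hinf : ∃ x : EuclideanSpace ℝ (Fin m), x ∈ S ∧ x ∈ T ∧ ‖x‖ = 1 := by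
    have hsup : Module.finrank ℝ ↥(S ⊔ T) ≤ m := by
      have := Submodule.finrank_le (S ⊔ T)
      simpa [finrank_euclideanSpace] using this
    have heq := Submodule.finrank_sup_add_finrank_inf_eq S T
    rw [hdimS, hdimT] at heq
    have hpos : 0 < Module.finrank ℝ ↥(S ⊓ T) := by omega
    obtain ⟨⟨x, hxmem⟩, hx0⟩ := Module.finrank_pos_iff_exists_ne_zero.mp hpos
    have hx0' : x ≠ 0 := fun h => hx0 (Subtype.ext h)
    refine ⟨‖x‖⁻¹ • x, Submodule.smul_mem _ _ hxmem.1, Submodule.smul_mem _ _ hxmem.2, ?_⟩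
    rw [norm_smul, norm_inv, norm_norm, inv_mul_cancel₀ (norm_ne_zero_iff.mpr hx0')]
  obtain ⟨x, hxS, hxT, hx1⟩ := hinf
  have hx1sq : ‖x‖ ^ 2 = 1 := by rw [hx1]; norm_num
  have hlow : sval A k ≤ ‖toEuclideanLin A x‖ := by
    have hsq : ν a ≤ ‖toEuclideanLin A x‖ ^ 2 := by
      rw [hνx x]
      have h0 : ν a = ∑ i, ν a * (inner ℝ (u i) x : ℝ) ^ 2 := by
        rw [← Finset.mul_sum, ← norm_sq_eq_sum_inner u x, hx1sq, mul_one]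
      rw [h0]
      refine Finset.sum_le_sum fun i _ => ?_
      rcases le_or_gt a i with hai | hai
      · nlinarith [hνm hai, sq_nonneg (inner ℝ (u i) x : ℝ)]
      · rw [inner_eq_zero_of_mem_span u _ hxS (not_le.mpr hai)]
        simp
    rw [hνs k hk1 hkm]
    calc Real.sqrt (ν ⟨m - k, by omega⟩) ≤ Real.sqrt (‖toEuclideanLin A x‖ ^ 2) :=
          Real.sqrt_le_sqrt hsq
      _ = ‖toEuclideanLin A x‖ := Real.sqrt_sq (norm_nonneg _)
  have hup : ‖toEuclideanLin B x‖ ≤ sval B k := by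
    have hsq : ‖toEuclideanLin B x‖ ^ 2 ≤ τ a := by
      rw [hτx x]
      have h0 : τ a = ∑ i, τ a * (inner ℝ (w i) x : ℝ) ^ 2 := by
        rw [← Finset.mul_sum, ← norm_sq_eq_sum_inner w x, hx1sq, mul_one]
      rw [h0]
      refine Finset.sum_le_sum fun i _ => ?_
      rcases le_or_gt i a with hai | hai
      · nlinarith [hτm hai, sq_nonneg (inner ℝ (w i) x : ℝ)]
      · rw [inner_eq_zero_of_mem_span w _ hxT (not_le.mpr hai)]
        simp
    rw [hτs k hk1 hkm]
    calc ‖toEuclideanLin B x‖ = Real.sqrt (‖toEuclideanLin B x‖ ^ 2) :=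
          (Real.sqrt_sq (norm_nonneg _)).symm
      _ ≤ Real.sqrt (τ ⟨m - k, by omega⟩) := Real.sqrt_le_sqrt hsq
  have htri : ‖toEuclideanLin A x‖ ≤ ‖toEuclideanLin B x‖ + ‖A - B‖ := by
    have hAx : toEuclideanLin A x = toEuclideanLin B x + toEuclideanLin (A - B) x := by
      rw [map_sub]; simp
    rw [hAx]
    calc ‖toEuclideanLin B x + toEuclideanLin (A - B) x‖
        ≤ ‖toEuclideanLin B x‖ + ‖toEuclideanLin (A - B) x‖ := norm_add_le _ _
      _ ≤ ‖toEuclideanLin B x‖ + ‖A - B‖ := by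
          have := le_opNorm' (A - B) x
          rw [hx1, mul_one] at this
          linarith
  linarith

lemma opNorm_transpose' {n m : ℕ} (M : Matrix (Fin n) (Fin m) ℝ) : ‖Mᵀ‖ = ‖M‖ := by
  rw [← Matrix.conjTranspose_eq_transpose_of_trivial, Matrix.l2_opNorm_conjTranspose]

lemma opNorm_one_le' {k : ℕ} : ‖(1 : Matrix (Fin k) (Fin k) ℝ)‖ ≤ 1 := by
  refine opNorm_le_bound' _ zero_le_one fun x => ?_
  rw [one_mul]
  apply le_of_eq
  congr 1
  rw [toEuclideanLin_apply]
  simp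

lemma opNorm_orthonormal_le' {n k : ℕ} (U : Matrix (Fin n) (Fin k) ℝ) (hU : Uᵀ * U = 1) :
    ‖U‖ ≤ 1 := by
  have h1 : ‖U‖ * ‖U‖ = ‖Uᴴ * U‖ := (Matrix.l2_opNorm_conjTranspose_mul_self U).symm
  rw [Matrix.conjTranspose_eq_transpose_of_trivial, hU] at h1
  nlinarith [norm_nonneg U, opNorm_one_le' (k := k)]

lemma opNorm_diagonal_le' {k : ℕ} (d : Fin k → ℝ) {c : ℝ} (hc : 0 ≤ c)
    (h : ∀ i, |d i| ≤ c) : ‖Matrix.diagonal d‖ ≤ c := by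
  refine opNorm_le_bound' _ hc fun x => ?_
  have hsq : ‖toEuclideanLin (Matrix.diagonal d) x‖ ^ 2 ≤ (c * ‖x‖) ^ 2 := by
    have he : ∀ i, (toEuclideanLin (Matrix.diagonal d) x) i = d i * x i := by
      intro i
      rw [toEuclideanLin_apply]
      show ((Matrix.diagonal d) *ᵥ _) i = _
      rw [Matrix.mulVec_diagonal]
    have h1 : ‖toEuclideanLin (Matrix.diagonal d) x‖ ^ 2 = ∑ i, (d i * x i) ^ 2 := by
      rw [EuclideanSpace.norm_eq, Real.sq_sqrt (by positivity)]
      exact Finset.sum_congr rfl fun i _ => by rw [he i, Real.norm_eq_abs, sq_abs]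
    have h2 : ‖x‖ ^ 2 = ∑ i, (x i) ^ 2 := by
      rw [EuclideanSpace.norm_eq, Real.sq_sqrt (by positivity)]
      exact Finset.sum_congr rfl fun i _ => by rw [Real.norm_eq_abs, sq_abs]
    rw [h1, mul_pow, h2, Finset.mul_sum]
    refine Finset.sum_le_sum fun i _ => ?_
    have := h i
    nlinarith [sq_nonneg (x i), abs_nonneg (d i), sq_abs (d i),
      mul_le_mul this this (abs_nonneg (d i)) hc, sq_abs (d i * x i), abs_mul (d i) (x i),
      sq_nonneg (d i * x i)]
  nlinarith [norm_nonneg (toEuclideanLin (Matrix.diagonal d) x), mul_nonneg hc (norm_nonneg x)]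

/-- If `‖Â − A‖ ≤ ε < σ_k(A)/12` and `(Û, D̂, V̂)` is a rank-`k` truncated
SVD of `Â` with whitening matrix `Ŵ = Û D̂⁻¹`, then
`‖I_k − Ŵᵀ A Aᵀ Ŵ‖ ≤ 6 ε / σ_k(A)`. -/
theorem whitened_gram_close_to_identity
    {n m k : ℕ} (hk : k ≤ min n m)
    (A Ahat : Matrix (Fin n) (Fin m) ℝ) (ε : ℝ)
    (hpert : matSpectralNorm (Ahat - A) ≤ ε) (hε : ε < sval A k / 12)
    (Uhat : Matrix (Fin n) (Fin k) ℝ) (Vhat : Matrix (Fin m) (Fin k) ℝ)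
    (Dhat : Matrix (Fin k) (Fin k) ℝ)
    (hU : Uhatᵀ * Uhat = 1) (hV : Vhatᵀ * Vhat = 1)
    (hD : Dhat = Matrix.diagonal fun i : Fin k => sval Ahat (i.val + 1))
    (hAV : Ahat * Vhat = Uhat * Dhat) (hAU : Ahatᵀ * Uhat = Vhat * Dhat)
    (What : Matrix (Fin n) (Fin k) ℝ) (hW : What = Uhat * Dhat⁻¹) :
    matSpectralNorm ((1 : Matrix (Fin k) (Fin k) ℝ) - Whatᵀ * A * Aᵀ * What) ≤
      6 * ε / sval A k := by
  classical
  -- basic positivity facts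
  have hε0 : 0 ≤ ε := le_trans (sval_nonneg _ 1) hpert
  have hk1 : 1 ≤ k := by
    by_contra hk0
    have : k = 0 := by omega
    subst this
    have : sval A 0 = 0 := by rw [sval]; simp
    rw [this] at hε
    linarith
  have hkm : k ≤ m := le_trans hk (min_le_right _ _)
  set σ := sval A k with hσ
  have hσpos : 0 < σ := by
    have := sval_nonneg A k
    by_contra h
    push_neg at h
    nlinarith
  have hE : ‖Ahat - A‖ ≤ ε := by rwa [← sval_one_eq_opNorm]
  -- Weyl: σ̂ ≥ σ - ε
  set s := sval Ahat k with hs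
  have hweyl : σ - ε ≤ s := by
    have := weyl_sval hk1 hkm A Ahat
    have hrev : ‖A - Ahat‖ = ‖Ahat - A‖ := norm_sub_rev _ _
    rw [hrev] at this
    linarith
  have hspos : 0 < s := by linarith [hε0, hσpos, hε]
  -- diagonal entries
  set d : Fin k → ℝ := fun i => sval Ahat (i.val + 1) with hd
  have hdpos : ∀ i, s ≤ d i := fun i =>
    sval_antitone Ahat (by omega) (by omega : i.val + 1 ≤ k) hkm
  have hdpos' : ∀ i, 0 < d i := fun i => lt_of_lt_of_le hspos (hdpos i)
  clear_value σ s d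
  -- Dhat⁻¹
  have hDinv : Dhat⁻¹ = Matrix.diagonal fun i => (d i)⁻¹ := by
    apply Matrix.inv_eq_right_inv
    rw [hD, Matrix.diagonal_mul_diagonal]
    convert Matrix.diagonal_one
    exact mul_inv_cancel₀ (ne_of_gt (hdpos' _))
  have hDinvD : Dhat⁻¹ * Dhat = 1 := by
    rw [hDinv, hD, Matrix.diagonal_mul_diagonal]
    convert Matrix.diagonal_one
    exact inv_mul_cancel₀ (ne_of_gt (hdpos' _))
  -- Whatᵀ * Ahat = Vhatᵀ
  have hWT : Whatᵀ = Dhat⁻¹ * Uhatᵀ := by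
    rw [hW, Matrix.transpose_mul, hDinv, Matrix.diagonal_transpose]
  have hUA : Uhatᵀ * Ahat = Dhat * Vhatᵀ := by
    have := congrArg Matrix.transpose hAU
    rw [Matrix.transpose_mul, Matrix.transpose_transpose, Matrix.transpose_mul] at this
    rw [this, hD, Matrix.diagonal_transpose]
  have hWA : Whatᵀ * Ahat = Vhatᵀ := by
    rw [hWT, Matrix.mul_assoc, hUA, ← Matrix.mul_assoc, hDinvD, Matrix.one_mul]
  -- the key algebraic identity
  set E := Ahat - A with hEdef
  set Y := Whatᵀ * E with hY
  have hWA' : Whatᵀ * A = Vhatᵀ - Y := by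
    rw [hY, hEdef, Matrix.mul_sub, hWA]
    abel
  have hAW : Aᵀ * What = Vhat - Yᵀ := by
    have := congrArg Matrix.transpose hWA'
    rw [Matrix.transpose_mul, Matrix.transpose_transpose, Matrix.transpose_sub,
      Matrix.transpose_transpose] at this
    exact this
  have hG : (1 : Matrix (Fin k) (Fin k) ℝ) - Whatᵀ * A * Aᵀ * What
      = Vhatᵀ * Yᵀ + Y * Vhat - Y * Yᵀ := by
    have hassoc : Whatᵀ * A * Aᵀ * What = (Whatᵀ * A) * (Aᵀ * What) := by
      rw [Matrix.mul_assoc]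
    rw [hassoc, hWA', hAW, Matrix.sub_mul, Matrix.mul_sub, Matrix.mul_sub, hV]
    abel
  -- norm bounds
  have hYnorm : ‖Y‖ ≤ ε / s := by
    have hWn : ‖What‖ ≤ s⁻¹ := by
      rw [hW]
      calc ‖Uhat * Dhat⁻¹‖ ≤ ‖Uhat‖ * ‖Dhat⁻¹‖ := Matrix.l2_opNorm_mul _ _
        _ ≤ 1 * s⁻¹ := by
            refine mul_le_mul (opNorm_orthonormal_le' Uhat hU) ?_ (norm_nonneg _) zero_le_one
            rw [hDinv]
            refine opNorm_diagonal_le' _ (by positivity) fun i => ?_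
            rw [abs_of_nonneg (le_of_lt (inv_pos.mpr (hdpos' i)))]
            exact inv_anti₀ hspos (hdpos i)
        _ = s⁻¹ := one_mul _
    calc ‖Y‖ ≤ ‖Whatᵀ‖ * ‖E‖ := Matrix.l2_opNorm_mul _ _
      _ ≤ s⁻¹ * ε := by
          rw [opNorm_transpose']
          exact mul_le_mul hWn hE (norm_nonneg _) (by positivity)
      _ = ε / s := by rw [div_eq_mul_inv, mul_comm]
  have hY0 : 0 ≤ ‖Y‖ := norm_nonneg _
  have hGnorm : ‖(1 : Matrix (Fin k) (Fin k) ℝ) - Whatᵀ * A * Aᵀ * What‖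
      ≤ 2 * (ε / s) + (ε / s) ^ 2 := by
    rw [hG]
    have h1 : ‖Vhatᵀ * Yᵀ + Y * Vhat - Y * Yᵀ‖ ≤ ‖Vhatᵀ * Yᵀ‖ + ‖Y * Vhat‖ + ‖Y * Yᵀ‖ := by
      calc ‖Vhatᵀ * Yᵀ + Y * Vhat - Y * Yᵀ‖ ≤ ‖Vhatᵀ * Yᵀ + Y * Vhat‖ + ‖Y * Yᵀ‖ :=
            norm_sub_le _ _
        _ ≤ ‖Vhatᵀ * Yᵀ‖ + ‖Y * Vhat‖ + ‖Y * Yᵀ‖ := by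
            have := norm_add_le (Vhatᵀ * Yᵀ) (Y * Vhat)
            linarith
    have hVn : ‖Vhat‖ ≤ 1 := opNorm_orthonormal_le' Vhat hV
    have hVtn : ‖Vhatᵀ‖ ≤ 1 := by rw [opNorm_transpose']; exact hVn
    have h2 : ‖Vhatᵀ * Yᵀ‖ ≤ ε / s := by
      calc ‖Vhatᵀ * Yᵀ‖ ≤ ‖Vhatᵀ‖ * ‖Yᵀ‖ := Matrix.l2_opNorm_mul _ _
        _ ≤ 1 * (ε / s) := by
            rw [opNorm_transpose' Y]
            exact mul_le_mul hVtn hYnorm hY0 zero_le_one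
        _ = ε / s := one_mul _
    have h3 : ‖Y * Vhat‖ ≤ ε / s := by
      calc ‖Y * Vhat‖ ≤ ‖Y‖ * ‖Vhat‖ := Matrix.l2_opNorm_mul _ _
        _ ≤ (ε / s) * 1 := mul_le_mul hYnorm hVn (norm_nonneg _) (by positivity)
        _ = ε / s := mul_one _
    have h4 : ‖Y * Yᵀ‖ ≤ (ε / s) ^ 2 := by
      calc ‖Y * Yᵀ‖ ≤ ‖Y‖ * ‖Yᵀ‖ := Matrix.l2_opNorm_mul _ _
        _ ≤ (ε / s) * (ε / s) := by
            rw [opNorm_transpose']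
            exact mul_le_mul hYnorm hYnorm hY0 (by positivity)
        _ = (ε / s) ^ 2 := (sq (ε / s)).symm
    linarith
  clear_value E Y
  clear hG hWA' hAW hWA hUA hWT hDinvD hDinv hD hAV hAU hW hpert hYnorm hY0 hdpos hdpos' hE
  -- final arithmetic
  rw [show matSpectralNorm ((1 : Matrix (Fin k) (Fin k) ℝ) - Whatᵀ * A * Aᵀ * What)
      = ‖(1 : Matrix (Fin k) (Fin k) ℝ) - Whatᵀ * A * Aᵀ * What‖ from sval_one_eq_opNorm _]
  refine le_trans hGnorm ?_
  set t := ε / s with htdef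
  clear_value t
  have ht0 : 0 ≤ t := htdef ▸ by positivity
  have ht11 : t ≤ 1 / 11 := by
    rw [htdef, div_le_div_iff₀ hspos (by norm_num)]
    linarith
  have ht2 : t ≤ (12 / 11) * (ε / σ) := by
    have h12 : (12 / 11 : ℝ) * (ε / σ) = 12 * ε / (11 * σ) := by ring
    rw [htdef, h12, div_le_div_iff₀ hspos (by positivity)]
    nlinarith [mul_nonneg hε0 (by linarith : (0:ℝ) ≤ σ - 12 * ε)]
  have hq0 : 0 ≤ ε / σ := by positivity
  have hsq : t ^ 2 ≤ (1 / 11) * t := by nlinarith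
  have h6 : 6 * ε / σ = 6 * (ε / σ) := by ring
  rw [h6]
  linarith
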